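/- Let A be a real symmetric 16×16 matrix (indexed by 1 ≤ i, j ≤ 16, so A_{ij} = A_{ji}) whose top-left 8×8 block has vanishing trace: ∑_{i=1}^{8} A_{ii} = 0. Then ∑_{i=1}^{16} ∑_{j=1}^{16} A_{ij}² ≥ (8/7)·∑_{j=1}^{16} A_{1j}². (This is the Hessian inequality satisfied by a Cayley-harmonic function on a manifold with holonomy Spin(9), yielding the refined Bochner inequality |∇²f|² ≥ (8/7)|∇|∇f||².) -/

import Mathlib

open Finset
open Fin.NatCast

lemma aux_cs (d1 d2 d3 d4 d5 d6 d7 : ℝ) :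
    (d1 + d2 + d3 + d4 + d5 + d6 + d7) ^ 2 ≤
      7 * (d1^2 + d2^2 + d3^2 + d4^2 + d5^2 + d6^2 + d7^2) := by
  nlinarith [sq_nonneg (d1 - d2), sq_nonneg (d1 - d3), sq_nonneg (d1 - d4),
    sq_nonneg (d1 - d5), sq_nonneg (d1 - d6), sq_nonneg (d1 - d7),
    sq_nonneg (d2 - d3), sq_nonneg (d2 - d4), sq_nonneg (d2 - d5),
    sq_nonneg (d2 - d6), sq_nonneg (d2 - d7),
    sq_nonneg (d3 - d4), sq_nonneg (d3 - d5), sq_nonneg (d3 - d6), sq_nonneg (d3 - d7),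
    sq_nonneg (d4 - d5), sq_nonneg (d4 - d6), sq_nonneg (d4 - d7),
    sq_nonneg (d5 - d6), sq_nonneg (d5 - d7), sq_nonneg (d6 - d7)]

set_option maxHeartbeats 1000000 in
/-- Hessian inequality for Cayley-harmonic functions: if `A` is a symmetric real
16×16 matrix (indices `0, …, 15` corresponding to `1, …, 16`) whose top-left 8×8 block
is trace-free, then `∑ᵢ ∑ⱼ Aᵢⱼ² ≥ (8/7) ∑ⱼ A₁ⱼ²` (here the first row is row `0`). -/
theorem cayley_hessian_inequality (A : Matrix (Fin 16) (Fin 16) ℝ)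
    (hsymm : ∀ i j : Fin 16, A i j = A j i)
    (htrace : ∑ i ∈ Finset.univ.filter (fun i : Fin 16 => (i : ℕ) < 8), A i i = 0) :
    (8 / 7 : ℝ) * ∑ j : Fin 16, (A 0 j) ^ 2 ≤ ∑ i : Fin 16, ∑ j : Fin 16, (A i j) ^ 2 := by
  have e : ∀ g : Fin 16 → ℝ, ∑ j : Fin 16, g j = ∑ j ∈ Finset.range 16, g (j : Fin 16) := by
    intro g
    have := Fin.sum_univ_eq_sum_range (fun j : ℕ => g (j : Fin 16)) 16
    simpa using this
  have h0 : A 0 0 = -(A 1 1 + A 2 2 + A 3 3 + A 4 4 + A 5 5 + A 6 6 + A 7 7) := by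
    rw [Finset.sum_filter, e] at htrace
    simp [Finset.sum_range_succ] at htrace
    linarith
  have hR : ∑ j : Fin 16, A 0 j ^ 2 = A 0 0^2 + A 0 1^2 + A 0 2^2 + A 0 3^2 + A 0 4^2
      + A 0 5^2 + A 0 6^2 + A 0 7^2 + A 0 8^2 + A 0 9^2 + A 0 10^2 + A 0 11^2 + A 0 12^2
      + A 0 13^2 + A 0 14^2 + A 0 15^2 := by
    rw [e]
    simp [Finset.sum_range_succ]
  have hrow : ∀ i : Fin 16, i ≠ 0 → A i 0^2 + A i i^2 ≤ ∑ j : Fin 16, A i j ^ 2 := by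
    intro i hi
    have h := Finset.sum_le_sum_of_subset_of_nonneg
      (Finset.subset_univ ({0, i} : Finset (Fin 16)))
      (fun j _ _ => sq_nonneg (A i j))
    rwa [Finset.sum_pair (Ne.symm hi)] at h
  have hS : ∑ i : Fin 16, ∑ j : Fin 16, A i j ^ 2 =
      (∑ j : Fin 16, A 0 j ^ 2) + (∑ j : Fin 16, A 1 j ^ 2) + (∑ j : Fin 16, A 2 j ^ 2)
      + (∑ j : Fin 16, A 3 j ^ 2) + (∑ j : Fin 16, A 4 j ^ 2) + (∑ j : Fin 16, A 5 j ^ 2)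
      + (∑ j : Fin 16, A 6 j ^ 2) + (∑ j : Fin 16, A 7 j ^ 2) + (∑ j : Fin 16, A 8 j ^ 2)
      + (∑ j : Fin 16, A 9 j ^ 2) + (∑ j : Fin 16, A 10 j ^ 2) + (∑ j : Fin 16, A 11 j ^ 2)
      + (∑ j : Fin 16, A 12 j ^ 2) + (∑ j : Fin 16, A 13 j ^ 2) + (∑ j : Fin 16, A 14 j ^ 2)
      + (∑ j : Fin 16, A 15 j ^ 2) := by
    rw [e (fun i => ∑ j : Fin 16, A i j ^ 2)]
    simp [Finset.sum_range_succ]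
  have h1 := hrow 1 (by decide)
  have h2 := hrow 2 (by decide)
  have h3 := hrow 3 (by decide)
  have h4 := hrow 4 (by decide)
  have h5 := hrow 5 (by decide)
  have h6 := hrow 6 (by decide)
  have h7 := hrow 7 (by decide)
  have h8 := hrow 8 (by decide)
  have h9 := hrow 9 (by decide)
  have h10 := hrow 10 (by decide)
  have h11 := hrow 11 (by decide)
  have h12 := hrow 12 (by decide)
  have h13 := hrow 13 (by decide)
  have h14 := hrow 14 (by decide)
  have h15 := hrow 15 (by decide)
  have hy : ∀ i : Fin 16, A i 0 = A 0 i := fun i => hsymm i 0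
  rw [hy 1] at h1; rw [hy 2] at h2; rw [hy 3] at h3; rw [hy 4] at h4
  rw [hy 5] at h5; rw [hy 6] at h6; rw [hy 7] at h7; rw [hy 8] at h8
  rw [hy 9] at h9; rw [hy 10] at h10; rw [hy 11] at h11; rw [hy 12] at h12
  rw [hy 13] at h13; rw [hy 14] at h14; rw [hy 15] at h15
  have hcs : A 0 0 ^ 2 ≤ 7 * (A 1 1^2 + A 2 2^2 + A 3 3^2 + A 4 4^2 + A 5 5^2
      + A 6 6^2 + A 7 7^2) := by
    rw [h0, neg_sq]
    exact aux_cs (A 1 1) (A 2 2) (A 3 3) (A 4 4) (A 5 5) (A 6 6) (A 7 7)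
  rw [hS, hR]
  linarith [sq_nonneg (A 8 8), sq_nonneg (A 9 9), sq_nonneg (A 10 10), sq_nonneg (A 11 11),
    sq_nonneg (A 12 12), sq_nonneg (A 13 13), sq_nonneg (A 14 14), sq_nonneg (A 15 15),
    sq_nonneg (A 0 1), sq_nonneg (A 0 2), sq_nonneg (A 0 3), sq_nonneg (A 0 4),
    sq_nonneg (A 0 5), sq_nonneg (A 0 6), sq_nonneg (A 0 7), sq_nonneg (A 0 8),
    sq_nonneg (A 0 9), sq_nonneg (A 0 10), sq_nonneg (A 0 11), sq_nonneg (A 0 12),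
    sq_nonneg (A 0 13), sq_nonneg (A 0 14), sq_nonneg (A 0 15)]
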